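/- Let X ⊂ ℝ^d be a compact convex set with nonempty interior, let ψ be a C² function on an open set containing X whose Hessian ψ″ is positive definite on X, and let γ be the associated Riemannian distance with paths in X. Let λ > 1, let U be a relatively open convex subset of X, and let p ∈ U be such that for all u ∈ U and v ∈ ℝ^d: (1/λ)·vᵀψ″(u)v ≤ vᵀψ″(p)v ≤ λ·vᵀψ″(u)v. Then for all x, y ∈ U with γ(x,y) < inf{ γ(x,z) : z ∈ X \ U }, one has (1/(2λ⁴))·γ(x,y)² ≤ D_ψ(x;y) ≤ (λ⁴/2)·γ(x,y)². -/

import Mathlib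

/-- The Hessian matrix of `ψ : ℝ^d → ℝ` at the point `x`. -/
noncomputable def hess {d : ℕ} (ψ : EuclideanSpace ℝ (Fin d) → ℝ)
    (x : EuclideanSpace ℝ (Fin d)) : Matrix (Fin d) (Fin d) ℝ :=
  Matrix.of fun i j =>
    iteratedFDeriv ℝ 2 ψ x ![EuclideanSpace.single i 1, EuclideanSpace.single j 1]

/-- The quadratic form `v ↦ vᵀ M v` on `ℝ^d` associated to a matrix `M`. -/
noncomputable def quadForm {d : ℕ} (M : Matrix (Fin d) (Fin d) ℝ)
    (v : EuclideanSpace ℝ (Fin d)) : ℝ :=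
  ∑ i, ∑ j, v i * M i j * v j

/-- The Bregman distance `D_ψ(x;y) = ψ(x) − ψ(y) − ∇ψ(y)ᵀ(x−y)`. -/
noncomputable def breg {d : ℕ} (ψ : EuclideanSpace ℝ (Fin d) → ℝ)
    (x y : EuclideanSpace ℝ (Fin d)) : ℝ :=
  ψ x - ψ y - inner ℝ (gradient ψ y) (x - y)

/-- The Riemannian distance on `X` associated to the Hessian metric of `ψ`. -/
noncomputable def riemDist {d : ℕ} (X : Set (EuclideanSpace ℝ (Fin d)))
    (ψ : EuclideanSpace ℝ (Fin d) → ℝ) (x y : EuclideanSpace ℝ (Fin d)) : ℝ :=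
  sInf {L : ℝ | ∃ u : ℝ → EuclideanSpace ℝ (Fin d), ContDiff ℝ 1 u ∧
    (∀ t ∈ Set.Icc (0 : ℝ) 1, u t ∈ X) ∧ u 0 = x ∧ u 1 = y ∧
    L = ∫ t in (0:ℝ)..1, Real.sqrt (quadForm (hess ψ (u t)) (deriv u t))}

open Set Matrix intervalIntegral

section Aux

variable {d : ℕ}

lemma quadForm_eq_dot (M : Matrix (Fin d) (Fin d) ℝ) (v : EuclideanSpace ℝ (Fin d)) :
    quadForm M v = dotProduct (star (v : Fin d → ℝ)) (M *ᵥ v) := by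
  simp [quadForm, dotProduct, Matrix.mulVec, Finset.mul_sum, mul_assoc]

lemma quadForm_nonneg {M : Matrix (Fin d) (Fin d) ℝ} (hM : M.PosDef)
    (v : EuclideanSpace ℝ (Fin d)) : 0 ≤ quadForm M v := by
  rw [quadForm_eq_dot]; exact hM.posSemidef.dotProduct_mulVec_nonneg _

lemma quadForm_smul (M : Matrix (Fin d) (Fin d) ℝ) (c : ℝ) (v : EuclideanSpace ℝ (Fin d)) :
    quadForm M (c • v) = c ^ 2 * quadForm M v := by
  simp only [quadForm, PiLp.smul_apply, smul_eq_mul, Finset.mul_sum]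
  refine Finset.sum_congr rfl fun i _ => Finset.sum_congr rfl fun j _ => by ring

lemma quadForm_neg (M : Matrix (Fin d) (Fin d) ℝ) (v : EuclideanSpace ℝ (Fin d)) :
    quadForm M (-v) = quadForm M v := by
  simp only [quadForm, PiLp.neg_apply]
  refine Finset.sum_congr rfl fun i _ => Finset.sum_congr rfl fun j _ => by ring

lemma quadForm_hess (ψ : EuclideanSpace ℝ (Fin d) → ℝ) (z v : EuclideanSpace ℝ (Fin d)) :
    quadForm (hess ψ z) v = iteratedFDeriv ℝ 2 ψ z ![v, v] := by
  set f := iteratedFDeriv ℝ 2 ψ z with hf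
  have hv : ![v, v] = fun k : Fin 2 => ∑ i, v i • EuclideanSpace.single i (1:ℝ) := by
    funext k
    have hvv : v = ∑ i, v i • EuclideanSpace.single i (1:ℝ) := by
      ext j
      rw [show (∑ x : Fin d, v x • EuclideanSpace.single x (1:ℝ)) j
          = ∑ x : Fin d, (v x • EuclideanSpace.single x (1:ℝ)) j from by rw [WithLp.ofLp_sum]; exact Finset.sum_apply j _ _]
      simp [EuclideanSpace.single_apply]
    fin_cases k <;> simpa using hvv
  rw [show quadForm (hess ψ z) v
      = ∑ i, ∑ j, v i * (f ![EuclideanSpace.single i 1, EuclideanSpace.single j 1]) * v j from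
    rfl]
  rw [hv, f.map_sum]
  rw [← (finTwoArrowEquiv (Fin d)).symm.sum_comp]
  simp only [finTwoArrowEquiv_symm_apply]
  rw [Fintype.sum_prod_type]
  refine (Finset.sum_congr rfl fun i _ => Finset.sum_congr rfl fun j _ => ?_).symm
  have : (fun k : Fin 2 => v (![i, j] k) • EuclideanSpace.single (![i, j] k) (1:ℝ))
      = fun k => (fun k : Fin 2 => v (![i,j] k)) k •
        (![EuclideanSpace.single i 1, EuclideanSpace.single j 1] :
          Fin 2 → EuclideanSpace ℝ (Fin d)) k := by
    funext k; fin_cases k <;> simp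
  rw [this, f.map_smul_univ]
  simp [Fin.prod_univ_two]
  ring

lemma taylor_aux {V : Set (EuclideanSpace ℝ (Fin d))} (hV : IsOpen V)
    {ψ : EuclideanSpace ℝ (Fin d) → ℝ} (hψ : ContDiffOn ℝ 2 ψ V)
    (y w : EuclideanSpace ℝ (Fin d)) (hseg : ∀ t ∈ Icc (0:ℝ) 1, y + t • w ∈ V) :
    ∃ c ∈ Ioo (0:ℝ) 1,
      ψ (y + w) - ψ y - fderiv ℝ ψ y w = quadForm (hess ψ (y + c • w)) w / 2 := by
  set c : ℝ → EuclideanSpace ℝ (Fin d) := fun t => y + t • w with hc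
  set g : ℝ → ℝ := fun t => ψ (c t) with hgdef
  set h : ℝ → ℝ := fun t => fderiv ℝ ψ (c t) w with hhdef
  have hcd : ∀ t : ℝ, HasDerivAt c w t := by
    intro t
    simpa [hc] using ((hasDerivAt_id t).smul_const w).const_add y
  have hmem : ∀ t ∈ Icc (0:ℝ) 1, c t ∈ V := hseg
  have hca : ∀ t ∈ Icc (0:ℝ) 1, ContDiffAt ℝ 2 ψ (c t) := fun t ht =>
    hψ.contDiffAt (hV.mem_nhds (hmem t ht))
  have hg : ∀ t ∈ Icc (0:ℝ) 1, HasDerivAt g (h t) t := by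
    intro t ht
    exact (((hca t ht).differentiableAt (by norm_num)).hasFDerivAt).comp_hasDerivAt t (hcd t)
  have hh : ∀ t ∈ Icc (0:ℝ) 1, HasDerivAt h (quadForm (hess ψ (c t)) w) t := by
    intro t ht
    have hd2 : DifferentiableAt ℝ (fderiv ℝ ψ) (c t) :=
      ((hca t ht).fderiv_right (by norm_num : (1:WithTop ℕ∞)+1 ≤ 2)).differentiableAt (by norm_num)
    have h1 : HasDerivAt (fun s => fderiv ℝ ψ (c s)) (fderiv ℝ (fderiv ℝ ψ) (c t) w) t :=
      hd2.hasFDerivAt.comp_hasDerivAt t (hcd t)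
    have h2 : HasDerivAt h ((ContinuousLinearMap.apply ℝ ℝ w) (fderiv ℝ (fderiv ℝ ψ) (c t) w)) t :=
      (ContinuousLinearMap.apply ℝ ℝ w).hasFDerivAt.comp_hasDerivAt t h1
    have h3 : (ContinuousLinearMap.apply ℝ ℝ w) (fderiv ℝ (fderiv ℝ ψ) (c t) w)
        = quadForm (hess ψ (c t)) w := by
      rw [quadForm_hess, iteratedFDeriv_two_apply]
      simp
    rwa [h3] at h2
  have hudo : UniqueDiffOn ℝ (Icc (0:ℝ) 1) := uniqueDiffOn_Icc one_pos
  have heq : ∀ t ∈ Icc (0:ℝ) 1, iteratedDerivWithin 1 g (Icc (0:ℝ) 1) t = h t := by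
    intro t ht
    rw [iteratedDerivWithin_one]
    rw [(hg t ht).differentiableAt.derivWithin (hudo t ht)]
    exact (hg t ht).deriv
  have hfc : ContDiffOn ℝ 1 g (Icc (0:ℝ) 1) := by
    have hcc : ContDiff ℝ 1 c := by
      apply ContDiff.add contDiff_const
      exact (contDiff_id.smul contDiff_const)
    exact (hψ.of_le one_le_two).comp hcc.contDiffOn hmem
  have hf' : DifferentiableOn ℝ (iteratedDerivWithin 1 g (Icc (0:ℝ) 1)) (Ioo (0:ℝ) 1) := by
    intro t ht
    have hIcc : Icc (0:ℝ) 1 ∈ nhds t := Icc_mem_nhds ht.1 ht.2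
    have hev : iteratedDerivWithin 1 g (Icc (0:ℝ) 1) =ᶠ[nhds t] h :=
      Filter.eventuallyEq_of_mem hIcc heq
    exact (hev.differentiableAt_iff.mpr
      (hh t (Ioo_subset_Icc_self ht)).differentiableAt).differentiableWithinAt
  obtain ⟨t', ht', htay⟩ := taylor_mean_remainder_lagrange (n := 1) (x₀ := 0) (x := 1) zero_ne_one
    (by rw [uIcc_of_le zero_le_one]; exact_mod_cast hfc)
    (by rw [uIcc_of_le zero_le_one, uIoo_of_le zero_le_one]; exact hf')
  rw [uIoo_of_le zero_le_one] at ht'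
  rw [uIcc_of_le zero_le_one] at htay
  refine ⟨t', ht', ?_⟩
  have h2' : iteratedDerivWithin 2 g (Icc (0:ℝ) 1) t' = quadForm (hess ψ (c t')) w := by
    have ht'm := Ioo_subset_Icc_self ht'
    rw [show (2:ℕ) = 1 + 1 from rfl, iteratedDerivWithin_succ]
    rw [derivWithin_congr heq (heq t' ht'm)]
    rw [(hh t' ht'm).differentiableAt.derivWithin (hudo t' ht'm)]
    exact (hh t' ht'm).deriv
  have htayval : taylorWithinEval g 1 (Icc (0:ℝ) 1) 0 1 = g 0 + h 0 := by
    rw [taylor_within_apply, Finset.sum_range_succ, Finset.sum_range_one]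
    simp [heq 0 (left_mem_Icc.mpr zero_le_one)]
  rw [htayval, h2'] at htay
  have hg1 : g 1 = ψ (y + w) := by simp [hgdef, hc]
  have hg0 : g 0 = ψ y := by simp [hgdef, hc]
  have hh0 : h 0 = fderiv ℝ ψ y w := by simp [hhdef, hc]
  rw [hg1, hg0, hh0] at htay
  have h0 : c t' = y + t' • w := rfl
  rw [h0] at htay
  norm_num at htay
  linarith

lemma cont_quad {V : Set (EuclideanSpace ℝ (Fin d))} (hV : IsOpen V)
    {ψ : EuclideanSpace ℝ (Fin d) → ℝ} (hψ : ContDiffOn ℝ 2 ψ V)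
    {u vf : ℝ → EuclideanSpace ℝ (Fin d)} (hu : Continuous u) (hv : Continuous vf)
    (hmem : ∀ t ∈ Icc (0:ℝ) 1, u t ∈ V) :
    ContinuousOn (fun t => quadForm (hess ψ (u t)) (vf t)) (Icc (0:ℝ) 1) := by
  have hcont : ContinuousOn (iteratedFDeriv ℝ 2 ψ) V := by
    have h1 := hψ.continuousOn_iteratedFDerivWithin (m := 2) (by norm_num) hV.uniqueDiffOn
    exact h1.congr fun z hz => (iteratedFDerivWithin_of_isOpen 2 hV hz).symm
  have hentry : ∀ i j : Fin d, ContinuousOn (fun t => hess ψ (u t) i j) (Icc (0:ℝ) 1) := by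
    intro i j
    have : ContinuousOn (fun z => iteratedFDeriv ℝ 2 ψ z
        ![EuclideanSpace.single i 1, EuclideanSpace.single j 1]) V :=
      (continuous_eval_const _).comp_continuousOn hcont
    exact (this.comp hu.continuousOn hmem)
  simp only [quadForm]
  apply continuousOn_finset_sum
  intro i _
  apply continuousOn_finset_sum
  intro j _
  exact (((continuous_apply i).comp ((PiLp.continuous_ofLp ..).comp hv)).continuousOn.mul (hentry i j)).mul
    ((continuous_apply j).comp ((PiLp.continuous_ofLp ..).comp hv)).continuousOn

noncomputable def symB {d : ℕ} (M : Matrix (Fin d) (Fin d) ℝ)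
    (a b : EuclideanSpace ℝ (Fin d)) : ℝ :=
  ∑ i, ∑ j, (a i * M i j * b j + b i * M i j * a j)

lemma symB_self (M : Matrix (Fin d) (Fin d) ℝ) (v : EuclideanSpace ℝ (Fin d)) :
    symB M v v = 2 * quadForm M v := by
  simp only [symB, quadForm, Finset.mul_sum]
  refine Finset.sum_congr rfl fun i _ => Finset.sum_congr rfl fun j _ => by ring

lemma quad_expand (M : Matrix (Fin d) (Fin d) ℝ) (a b : EuclideanSpace ℝ (Fin d)) (t : ℝ) :
    quadForm M (a + t • b) = quadForm M a + t * symB M a b + t ^ 2 * quadForm M b := by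
  simp only [quadForm, symB, PiLp.add_apply, PiLp.smul_apply, smul_eq_mul, Finset.mul_sum,
    ← Finset.sum_add_distrib]
  refine Finset.sum_congr rfl fun i _ => Finset.sum_congr rfl fun j _ => by ring

lemma cs_real {Qa Qb s : ℝ} (ha : 0 ≤ Qa) (hb : 0 ≤ Qb)
    (h : ∀ t : ℝ, 0 ≤ Qa + t * s + t ^ 2 * Qb) :
    s ≤ 2 * Real.sqrt Qa * Real.sqrt Qb := by
  rcases eq_or_lt_of_le hb with hb0 | hbpos
  · have hs : s ≤ 0 := by
      by_contra hlt
      push_neg at hlt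
      have key := h (-(Qa + 1) / s)
      rw [div_mul_cancel₀ _ (ne_of_gt hlt)] at key
      nlinarith [sq_nonneg ((-(Qa + 1) / s)), key]
    have : 0 ≤ 2 * Real.sqrt Qa * Real.sqrt Qb := by positivity
    linarith
  · have key := h (-s / (2 * Qb))
    have h4 : 0 ≤ 4 * Qb * (Qa + (-s / (2 * Qb)) * s + (-s / (2 * Qb)) ^ 2 * Qb) :=
      mul_nonneg (by linarith) key
    have heq : 4 * Qb * (Qa + (-s / (2 * Qb)) * s + (-s / (2 * Qb)) ^ 2 * Qb)
        = 4 * Qa * Qb - s ^ 2 := by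
      field_simp
      ring
    have hsq : s ^ 2 ≤ 4 * Qa * Qb := by linarith [heq ▸ h4]
    have h1 : Real.sqrt (s ^ 2) ≤ Real.sqrt ((2 * Real.sqrt Qa * Real.sqrt Qb) ^ 2) := by
      apply Real.sqrt_le_sqrt
      rw [mul_pow, mul_pow, Real.sq_sqrt ha, Real.sq_sqrt hb]
      linarith
    rw [Real.sqrt_sq_eq_abs, Real.sqrt_sq_eq_abs] at h1
    have hRnn : 0 ≤ 2 * Real.sqrt Qa * Real.sqrt Qb := by positivity
    calc s ≤ |s| := le_abs_self s
    _ ≤ |2 * Real.sqrt Qa * Real.sqrt Qb| := h1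
    _ = 2 * Real.sqrt Qa * Real.sqrt Qb := abs_of_nonneg hRnn

lemma symB_le {M : Matrix (Fin d) (Fin d) ℝ} (hM : ∀ v, 0 ≤ quadForm M v)
    (a b : EuclideanSpace ℝ (Fin d)) :
    symB M a b ≤ 2 * Real.sqrt (quadForm M a) * Real.sqrt (quadForm M b) := by
  refine cs_real (hM a) (hM b) ?_
  intro t
  have := hM (a + t • b)
  rwa [quad_expand] at this

lemma symB_exists_clm (M : Matrix (Fin d) (Fin d) ℝ) (w : EuclideanSpace ℝ (Fin d)) :
    ∃ L : EuclideanSpace ℝ (Fin d) →L[ℝ] ℝ, ∀ v, L v = symB M w v := by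
  refine ⟨∑ j, (∑ i, (w i * M i j + M j i * w i)) • (EuclideanSpace.proj j :
      EuclideanSpace ℝ (Fin d) →L[ℝ] ℝ), fun v => ?_⟩
  have hproj : ∀ j : Fin d, (EuclideanSpace.proj j : EuclideanSpace ℝ (Fin d) →L[ℝ] ℝ) v = v j :=
    fun j => rfl
  simp only [ContinuousLinearMap.sum_apply, ContinuousLinearMap.smul_apply, hproj, smul_eq_mul]
  have step1 : (∑ j, (∑ i, (w i * M i j + M j i * w i)) * v j)
      = ∑ j, ∑ i, (w i * M i j * v j + M j i * w i * v j) := by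
    refine Finset.sum_congr rfl fun j _ => ?_
    rw [Finset.sum_mul]
    exact Finset.sum_congr rfl fun i _ => by ring
  have step2 : (∑ j : Fin d, ∑ i : Fin d, w i * M i j * v j)
      = ∑ i, ∑ j, w i * M i j * v j := Finset.sum_comm
  have step3 : (∑ j : Fin d, ∑ i : Fin d, M j i * w i * v j)
      = ∑ i, ∑ j, v i * M i j * w j :=
    Finset.sum_congr rfl fun i _ => Finset.sum_congr rfl fun j _ => by ring
  rw [step1]
  simp only [Finset.sum_add_distrib, symB, step2, step3]

lemma cont_quad_const (M : Matrix (Fin d) (Fin d) ℝ) {vf : ℝ → EuclideanSpace ℝ (Fin d)}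
    (hv : Continuous vf) : Continuous fun t => quadForm M (vf t) := by
  simp only [quadForm]
  apply continuous_finset_sum
  intro i _
  apply continuous_finset_sum
  intro j _
  exact (((continuous_apply i).comp ((PiLp.continuous_ofLp ..).comp hv)).mul continuous_const).mul ((continuous_apply j).comp ((PiLp.continuous_ofLp ..).comp hv))

lemma key_lower {M : Matrix (Fin d) (Fin d) ℝ} (hM : ∀ v, 0 ≤ quadForm M v)
    {u : ℝ → EuclideanSpace ℝ (Fin d)} (hu : ContDiff ℝ 1 u) :
    Real.sqrt (quadForm M (u 1 - u 0))
      ≤ ∫ t in (0:ℝ)..1, Real.sqrt (quadForm M (deriv u t)) := by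
  set w : EuclideanSpace ℝ (Fin d) := u 1 - u 0 with hw
  have hud : Continuous (deriv u) := hu.continuous_deriv le_rfl
  have hQd : Continuous fun t => quadForm M (deriv u t) := cont_quad_const M hud
  have hsQd : Continuous fun t => Real.sqrt (quadForm M (deriv u t)) :=
    Real.continuous_sqrt.comp hQd
  rcases eq_or_lt_of_le (hM w) with h0 | hpos
  · rw [← h0, Real.sqrt_zero]
    exact intervalIntegral.integral_nonneg zero_le_one fun t _ => Real.sqrt_nonneg _
  · obtain ⟨L, hL⟩ := symB_exists_clm M w
    have hftc : (∫ t in (0:ℝ)..1, deriv u t) = u 1 - u 0 :=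
      intervalIntegral.integral_deriv_eq_sub
        (fun t _ => (hu.differentiable (by norm_num)).differentiableAt)
        (hud.intervalIntegrable 0 1)
    have hcomm : (∫ t in (0:ℝ)..1, L (deriv u t)) = L (∫ t in (0:ℝ)..1, deriv u t) :=
      L.intervalIntegral_comp_comm (hud.intervalIntegrable 0 1)
    have h1 : 2 * quadForm M w = ∫ t in (0:ℝ)..1, symB M w (deriv u t) := by
      rw [← symB_self, ← hL w]
      rw [show (∫ t in (0:ℝ)..1, symB M w (deriv u t)) = ∫ t in (0:ℝ)..1, L (deriv u t) from
        intervalIntegral.integral_congr fun t _ => (hL _).symm]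
      rw [hcomm, hftc]
    have h2 : (∫ t in (0:ℝ)..1, symB M w (deriv u t))
        ≤ ∫ t in (0:ℝ)..1, 2 * Real.sqrt (quadForm M w) * Real.sqrt (quadForm M (deriv u t)) := by
      apply intervalIntegral.integral_mono_on zero_le_one
      · have hc : Continuous fun t => L (deriv u t) := L.continuous.comp hud
        exact (hc.intervalIntegrable (μ := MeasureTheory.volume) 0 1).congr (fun t _ => hL _)
      · exact ((continuous_const.mul hsQd)).intervalIntegrable 0 1
      · intro t _
        exact symB_le hM w (deriv u t)
    rw [intervalIntegral.integral_const_mul] at h2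
    have hI : 0 ≤ ∫ t in (0:ℝ)..1, Real.sqrt (quadForm M (deriv u t)) :=
      intervalIntegral.integral_nonneg zero_le_one fun t _ => Real.sqrt_nonneg _
    have hs : 0 < Real.sqrt (quadForm M w) := Real.sqrt_pos.mpr hpos
    have hQw : quadForm M w = Real.sqrt (quadForm M w) * Real.sqrt (quadForm M w) :=
      (Real.mul_self_sqrt (hM w)).symm
    nlinarith [h1, h2]

lemma riemDist_nonneg (X : Set (EuclideanSpace ℝ (Fin d))) (ψ : EuclideanSpace ℝ (Fin d) → ℝ)
    (x y : EuclideanSpace ℝ (Fin d)) : 0 ≤ riemDist X ψ x y := by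
  rw [riemDist]
  apply Real.sInf_nonneg
  rintro L ⟨u, -, -, -, -, rfl⟩
  exact intervalIntegral.integral_nonneg zero_le_one fun t _ => Real.sqrt_nonneg _

lemma riemDist_le (X : Set (EuclideanSpace ℝ (Fin d))) (ψ : EuclideanSpace ℝ (Fin d) → ℝ)
    {x y : EuclideanSpace ℝ (Fin d)} {u : ℝ → EuclideanSpace ℝ (Fin d)}
    (hu : ContDiff ℝ 1 u) (hX : ∀ t ∈ Icc (0:ℝ) 1, u t ∈ X) (h0 : u 0 = x) (h1 : u 1 = y) :
    riemDist X ψ x y ≤ ∫ t in (0:ℝ)..1, Real.sqrt (quadForm (hess ψ (u t)) (deriv u t)) := by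
  rw [riemDist]
  apply csInf_le
  · refine ⟨0, ?_⟩
    rintro L ⟨u', -, -, -, -, rfl⟩
    exact intervalIntegral.integral_nonneg zero_le_one fun t _ => Real.sqrt_nonneg _
  · exact ⟨u, hu, hX, h0, h1, rfl⟩

lemma straight_line_pt {x y : EuclideanSpace ℝ (Fin d)} {s : Set (EuclideanSpace ℝ (Fin d))}
    (hs : Convex ℝ s) (hx : x ∈ s) (hy : y ∈ s) {t : ℝ} (ht : t ∈ Icc (0:ℝ) 1) :
    x + t • (y - x) ∈ s := by
  have : x + t • (y - x) = (1 - t) • x + t • y := by module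
  rw [this]
  exact hs hx hy (by linarith [ht.1, ht.2]) ht.1 (by ring)

lemma straight_deriv (x y : EuclideanSpace ℝ (Fin d)) (t : ℝ) :
    HasDerivAt (fun t : ℝ => x + t • (y - x)) (y - x) t := by
  simpa using ((hasDerivAt_id t).smul_const (y - x)).const_add x

lemma straight_contDiff (x y : EuclideanSpace ℝ (Fin d)) :
    ContDiff ℝ 1 (fun t : ℝ => x + t • (y - x)) :=
  contDiff_const.add (contDiff_id.smul contDiff_const)

lemma le_riemDist {X : Set (EuclideanSpace ℝ (Fin d))} {ψ : EuclideanSpace ℝ (Fin d) → ℝ}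
    {x y : EuclideanSpace ℝ (Fin d)} {b : ℝ}
    (hXconv : Convex ℝ X) (hx : x ∈ X) (hy : y ∈ X)
    (hb : ∀ u : ℝ → EuclideanSpace ℝ (Fin d), ContDiff ℝ 1 u →
      (∀ t ∈ Icc (0:ℝ) 1, u t ∈ X) → u 0 = x → u 1 = y →
      b ≤ ∫ t in (0:ℝ)..1, Real.sqrt (quadForm (hess ψ (u t)) (deriv u t))) :
    b ≤ riemDist X ψ x y := by
  rw [riemDist]
  apply le_csInf
  · refine ⟨_, (fun t : ℝ => x + t • (y - x)), straight_contDiff x y,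
      fun t ht => straight_line_pt hXconv hx hy ht, by simp, ?_, rfl⟩
    simp
  · rintro L ⟨u, h1, h2, h3, h4, rfl⟩
    exact hb u h1 h2 h3 h4

end Aux

set_option maxHeartbeats 2000000 in
/-- Local equivalence between the Bregman distance and the squared Riemannian distance
on a relatively open convex subset `U` of `X` on which the Hessian of `ψ` is
`λ`-comparable to its value at `p`. -/
theorem stmt8 {d : ℕ} (X : Set (EuclideanSpace ℝ (Fin d)))
    (hXcomp : IsCompact X) (hXconv : Convex ℝ X) (hXint : (interior X).Nonempty)
    (ψ : EuclideanSpace ℝ (Fin d) → ℝ)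
    (hC2 : ∃ V : Set (EuclideanSpace ℝ (Fin d)), IsOpen V ∧ X ⊆ V ∧ ContDiffOn ℝ 2 ψ V)
    (hpos : ∀ x ∈ X, (hess ψ x).PosDef)
    (lam : ℝ) (hlam : 1 < lam)
    (U : Set (EuclideanSpace ℝ (Fin d))) (hUX : U ⊆ X) (hUconv : Convex ℝ U)
    (hUopen : ∃ W : Set (EuclideanSpace ℝ (Fin d)), IsOpen W ∧ U = X ∩ W)
    (p : EuclideanSpace ℝ (Fin d)) (hp : p ∈ U)
    (hcmp : ∀ u ∈ U, ∀ v : EuclideanSpace ℝ (Fin d),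
      (1 / lam) * quadForm (hess ψ u) v ≤ quadForm (hess ψ p) v ∧
      quadForm (hess ψ p) v ≤ lam * quadForm (hess ψ u) v) :
    ∀ x ∈ U, ∀ y ∈ U,
      riemDist X ψ x y < sInf {r : ℝ | ∃ z ∈ X \ U, r = riemDist X ψ x z} →
      (1 / (2 * lam ^ 4)) * (riemDist X ψ x y) ^ 2 ≤ breg ψ x y ∧
      breg ψ x y ≤ (lam ^ 4 / 2) * (riemDist X ψ x y) ^ 2 := by
  obtain ⟨V, hVopen, hXV, hψV⟩ := hC2
  obtain ⟨W, hWopen, hUW⟩ := hUopen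
  have hlam0 : (0:ℝ) < lam := lt_trans one_pos hlam
  intro x hx y hy hlt
  have hxX : x ∈ X := hUX hx
  have hyX : y ∈ X := hUX hy
  set γ := riemDist X ψ x y with hγdef
  have hγnn : 0 ≤ γ := riemDist_nonneg X ψ x y
  set N2 := quadForm (hess ψ p) (x - y) with hN2def
  have hN2nn : 0 ≤ N2 := quadForm_nonneg (hpos p (hUX hp)) _
  have hN2' : quadForm (hess ψ p) (y - x) = N2 := by
    rw [← neg_sub x y, quadForm_neg]
  -- Claim A : Bregman distance vs N2
  have hsegV : ∀ t ∈ Icc (0:ℝ) 1, y + t • (x - y) ∈ V := fun t ht =>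
    hXV (hUX (straight_line_pt hUconv hy hx ht))
  obtain ⟨c', hc', htay⟩ := taylor_aux hVopen hψV y (x - y) hsegV
  have hyw : y + (x - y) = x := by abel
  rw [hyw] at htay
  have hgrad : (inner ℝ (gradient ψ y) (x - y) : ℝ) = fderiv ℝ ψ y (x - y) :=
    InnerProductSpace.toDual_symm_apply
  have hbregeq : breg ψ x y = quadForm (hess ψ (y + c' • (x - y))) (x - y) / 2 := by
    rw [breg, hgrad, htay]
  have hzcU : y + c' • (x - y) ∈ U := straight_line_pt hUconv hy hx (Ioo_subset_Icc_self hc')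
  obtain ⟨hcmp1, hcmp2⟩ := hcmp _ hzcU (x - y)
  rw [← hN2def] at hcmp1 hcmp2
  have hbreg_lo : N2 / (2 * lam) ≤ breg ψ x y := by
    rw [hbregeq, div_le_div_iff₀ (by positivity) two_pos]
    nlinarith [hcmp2]
  have hbreg_hi : breg ψ x y ≤ lam * N2 / 2 := by
    rw [hbregeq]
    have h1 := mul_le_mul_of_nonneg_left hcmp1 hlam0.le
    rw [show lam * (1 / lam * quadForm (hess ψ (y + c' • (x - y))) (x - y))
        = quadForm (hess ψ (y + c' • (x - y))) (x - y) by field_simp] at h1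
    linarith
  -- Claim B : upper bound for γ
  have hγ_le : γ ≤ Real.sqrt (lam * N2) := by
    have hmemX : ∀ t ∈ Icc (0:ℝ) 1, x + t • (y - x) ∈ X :=
      fun t ht => straight_line_pt hXconv hxX hyX ht
    have hmemV : ∀ t ∈ Icc (0:ℝ) 1, x + t • (y - x) ∈ V := fun t ht => hXV (hmemX t ht)
    have hQle : ∀ t ∈ Icc (0:ℝ) 1, Real.sqrt (quadForm (hess ψ (x + t • (y - x))) (y - x))
        ≤ Real.sqrt (lam * N2) := by
      intro t ht
      apply Real.sqrt_le_sqrt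
      have hmemU := straight_line_pt hUconv hx hy ht
      have h := (hcmp _ hmemU (y - x)).1
      rw [hN2'] at h
      have h1 := mul_le_mul_of_nonneg_left h hlam0.le
      rw [show lam * (1 / lam * quadForm (hess ψ (x + t • (y - x))) (y - x))
          = quadForm (hess ψ (x + t • (y - x))) (y - x) by field_simp] at h1
      linarith
    calc γ ≤ ∫ t in (0:ℝ)..1, Real.sqrt (quadForm (hess ψ ((fun t : ℝ => x + t • (y - x)) t))
          (deriv (fun t : ℝ => x + t • (y - x)) t)) :=
        riemDist_le X ψ (straight_contDiff x y) hmemX (by simp) (by simp)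
    _ = ∫ t in (0:ℝ)..1, Real.sqrt (quadForm (hess ψ (x + t • (y - x))) (y - x)) :=
        intervalIntegral.integral_congr fun t _ => by rw [(straight_deriv x y t).deriv]
    _ ≤ ∫ t in (0:ℝ)..1, Real.sqrt (lam * N2) := by
        apply intervalIntegral.integral_mono_on zero_le_one
        · apply ContinuousOn.intervalIntegrable
          rw [uIcc_of_le zero_le_one]
          exact Real.continuous_sqrt.comp_continuousOn
            (cont_quad hVopen hψV (straight_contDiff x y).continuous continuous_const hmemV)
        · exact intervalIntegrable_const
        · exact hQle
    _ = Real.sqrt (lam * N2) := by simp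
  have hB : γ ^ 2 ≤ lam * N2 := by
    have h2 := pow_le_pow_left₀ hγnn hγ_le 2
    rwa [Real.sq_sqrt (by positivity)] at h2
  -- Claim C : lower bound for γ
  set A := sInf {r : ℝ | ∃ z ∈ X \ U, r = riemDist X ψ x z} with hAdef
  have hMp : ∀ v, 0 ≤ quadForm (hess ψ p) v := quadForm_nonneg (hpos p (hUX hp))
  have hxW : x ∈ W := (hUW ▸ hx).2
  have hpath : ∀ u : ℝ → EuclideanSpace ℝ (Fin d), ContDiff ℝ 1 u →
      (∀ t ∈ Icc (0:ℝ) 1, u t ∈ X) → u 0 = x → u 1 = y →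
      min (Real.sqrt (N2 / lam)) A
        ≤ ∫ t in (0:ℝ)..1, Real.sqrt (quadForm (hess ψ (u t)) (deriv u t)) := by
    intro u hu huX hu0 hu1
    have hud : Continuous (deriv u) := hu.continuous_deriv le_rfl
    have hfcont : ContinuousOn
        (fun t => Real.sqrt (quadForm (hess ψ (u t)) (deriv u t))) (Icc (0:ℝ) 1) :=
      Real.continuous_sqrt.comp_continuousOn
        (cont_quad hVopen hψV hu.continuous hud (fun t ht => hXV (huX t ht)))
    by_cases hstay : ∀ t ∈ Icc (0:ℝ) 1, u t ∈ U
    · refine le_trans (min_le_left _ _) ?_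
      have hpt : ∀ t ∈ Icc (0:ℝ) 1, Real.sqrt (quadForm (hess ψ p) (deriv u t))
          ≤ Real.sqrt lam * Real.sqrt (quadForm (hess ψ (u t)) (deriv u t)) := by
        intro t ht
        have h := (hcmp _ (hstay t ht) (deriv u t)).2
        rw [← Real.sqrt_mul hlam0.le]
        exact Real.sqrt_le_sqrt h
      have hIle : (∫ t in (0:ℝ)..1, Real.sqrt (quadForm (hess ψ p) (deriv u t)))
          ≤ Real.sqrt lam * ∫ t in (0:ℝ)..1,
            Real.sqrt (quadForm (hess ψ (u t)) (deriv u t)) := by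
        rw [← intervalIntegral.integral_const_mul]
        apply intervalIntegral.integral_mono_on zero_le_one
        · exact (Real.continuous_sqrt.comp
            (cont_quad_const (hess ψ p) hud)).intervalIntegrable 0 1
        · apply ContinuousOn.intervalIntegrable
          rw [uIcc_of_le zero_le_one]
          exact continuousOn_const.mul hfcont
        · exact hpt
      have hkl := key_lower hMp hu
      rw [hu1, hu0, hN2'] at hkl
      have hsl : 0 < Real.sqrt lam := Real.sqrt_pos.mpr hlam0
      rw [Real.sqrt_div hN2nn, div_le_iff₀ hsl]
      calc Real.sqrt N2 ≤ ∫ t in (0:ℝ)..1, Real.sqrt (quadForm (hess ψ p) (deriv u t)) := hkl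
      _ ≤ Real.sqrt lam * ∫ t in (0:ℝ)..1,
            Real.sqrt (quadForm (hess ψ (u t)) (deriv u t)) := hIle
      _ = (∫ t in (0:ℝ)..1, Real.sqrt (quadForm (hess ψ (u t)) (deriv u t))) * Real.sqrt lam :=
          mul_comm _ _
    · push_neg at hstay
      obtain ⟨t₀, ht₀, ht₀U⟩ := hstay
      set T := Icc (0:ℝ) 1 ∩ u ⁻¹' Wᶜ with hTdef
      have hTc : IsClosed T := isClosed_Icc.inter (hWopen.isClosed_compl.preimage hu.continuous)
      have ht₀T : t₀ ∈ T := ⟨ht₀, fun hW => ht₀U (hUW ▸ ⟨huX t₀ ht₀, hW⟩)⟩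
      have hTbdd : BddBelow T := ⟨0, fun t ht => ht.1.1⟩
      set s := sInf T with hsdef
      have hsT : s ∈ T := hTc.csInf_mem ⟨t₀, ht₀T⟩ hTbdd
      have hs01 : s ∈ Icc (0:ℝ) 1 := hsT.1
      have hzX : u s ∈ X := huX s hs01
      have hzU : u s ∉ U := fun hU => hsT.2 ((hUW ▸ hU).2)
      have hspos : 0 < s := by
        rcases lt_or_eq_of_le hs01.1 with h | h
        · exact h
        · exfalso
          apply hsT.2
          show u s ∈ W
          rw [← h, hu0]
          exact hxW
      set v := fun t : ℝ => u (s * t) with hvdef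
      have hv1 : ContDiff ℝ 1 v := hu.comp (contDiff_const.mul contDiff_id)
      have hvX : ∀ t ∈ Icc (0:ℝ) 1, v t ∈ X := by
        intro t ht
        apply huX
        refine ⟨mul_nonneg hspos.le ht.1, ?_⟩
        calc s * t ≤ s * 1 := mul_le_mul_of_nonneg_left ht.2 hspos.le
        _ ≤ 1 := by rw [mul_one]; exact hs01.2
      have hv0 : v 0 = x := by simp [hvdef, hu0]
      have hv1' : v 1 = u s := by simp [hvdef]
      have hvderiv : ∀ t : ℝ, deriv v t = s • deriv u (s * t) := by
        intro t
        have hdu : HasDerivAt u (deriv u (s * t)) (s * t) :=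
          ((hu.differentiable (by norm_num)) _).hasDerivAt
        have hmul : HasDerivAt (fun t : ℝ => s * t) s t := by
          simpa using (hasDerivAt_id t).const_mul s
        exact (hdu.scomp t hmul).deriv
      have hrle : riemDist X ψ x (u s)
          ≤ ∫ t in (0:ℝ)..1, Real.sqrt (quadForm (hess ψ (v t)) (deriv v t)) :=
        riemDist_le X ψ hv1 hvX hv0 hv1'
      have e1 : (∫ t in (0:ℝ)..1, Real.sqrt (quadForm (hess ψ (v t)) (deriv v t)))
          = ∫ t in (0:ℝ)..1, s * Real.sqrt (quadForm (hess ψ (u (s * t))) (deriv u (s * t))) := by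
        apply intervalIntegral.integral_congr
        intro t _
        dsimp only
        rw [hvderiv t, quadForm_smul, Real.sqrt_mul (sq_nonneg s), Real.sqrt_sq hspos.le]
      have e2 : (∫ t in (0:ℝ)..1, s * Real.sqrt (quadForm (hess ψ (u (s * t))) (deriv u (s * t))))
          = s • ∫ t in (0:ℝ)..1,
            (fun τ => Real.sqrt (quadForm (hess ψ (u τ)) (deriv u τ))) (s * t) := by
        rw [intervalIntegral.integral_const_mul]
        rfl
      have e3 : (s • ∫ t in (0:ℝ)..1,
            (fun τ => Real.sqrt (quadForm (hess ψ (u τ)) (deriv u τ))) (s * t))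
          = ∫ τ in (s*0)..(s*1), Real.sqrt (quadForm (hess ψ (u τ)) (deriv u τ)) :=
        intervalIntegral.smul_integral_comp_mul_left (fun τ => Real.sqrt (quadForm (hess ψ (u τ)) (deriv u τ))) s
      have hLveq : (∫ t in (0:ℝ)..1, Real.sqrt (quadForm (hess ψ (v t)) (deriv v t)))
          = ∫ τ in (0:ℝ)..s, Real.sqrt (quadForm (hess ψ (u τ)) (deriv u τ)) := by
        rw [e1, e2, e3]
        norm_num
      have i1 : IntervalIntegrable
          (fun τ => Real.sqrt (quadForm (hess ψ (u τ)) (deriv u τ)))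
          MeasureTheory.volume 0 s := by
        apply ContinuousOn.intervalIntegrable
        rw [uIcc_of_le hspos.le]
        exact hfcont.mono (Icc_subset_Icc le_rfl hs01.2)
      have i2 : IntervalIntegrable
          (fun τ => Real.sqrt (quadForm (hess ψ (u τ)) (deriv u τ)))
          MeasureTheory.volume s 1 := by
        apply ContinuousOn.intervalIntegrable
        rw [uIcc_of_le hs01.2]
        exact hfcont.mono (Icc_subset_Icc hs01.1 le_rfl)
      have hadd := intervalIntegral.integral_add_adjacent_intervals i1 i2
      have h2nn : 0 ≤ ∫ τ in s..1, Real.sqrt (quadForm (hess ψ (u τ)) (deriv u τ)) :=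
        intervalIntegral.integral_nonneg hs01.2 fun τ _ => Real.sqrt_nonneg _
      have hAle : A ≤ riemDist X ψ x (u s) := by
        apply csInf_le
        · refine ⟨0, ?_⟩
          rintro r ⟨z, hz, rfl⟩
          exact riemDist_nonneg X ψ x z
        · exact ⟨u s, ⟨hzX, hzU⟩, rfl⟩
      refine le_trans (min_le_right _ _) ?_
      have hfin : A ≤ ∫ τ in (0:ℝ)..s, Real.sqrt (quadForm (hess ψ (u τ)) (deriv u τ)) := by
        rw [← hLveq]
        exact le_trans hAle hrle
      linarith
  have hγ_ge : min (Real.sqrt (N2 / lam)) A ≤ γ := le_riemDist hXconv hxX hyX hpath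
  clear_value γ N2 A
  clear hpath hγdef hN2def hAdef hbregeq htay hcmp1 hcmp2 hgrad
  have hlow : Real.sqrt (N2 / lam) ≤ γ := by
    rcases le_total (Real.sqrt (N2 / lam)) A with h | h
    · rwa [min_eq_left h] at hγ_ge
    · exfalso
      rw [min_eq_right h] at hγ_ge
      exact absurd hlt (not_lt.mpr hγ_ge)
  have hC : N2 ≤ lam * γ ^ 2 := by
    have h2 := pow_le_pow_left₀ (Real.sqrt_nonneg _) hlow 2
    rw [Real.sq_sqrt (div_nonneg hN2nn hlam0.le)] at h2
    rw [div_le_iff₀ hlam0] at h2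
    linarith
  constructor
  · have e1 : γ ^ 2 / lam ≤ N2 := by
      rw [div_le_iff₀ hlam0]
      nlinarith [hB]
    have hl2 : (1:ℝ) ≤ lam ^ 2 := by nlinarith
    have hl24 : lam ^ 2 ≤ lam ^ 4 := by nlinarith [sq_nonneg lam]
    calc (1 / (2 * lam ^ 4)) * γ ^ 2 ≤ (1 / (2 * lam ^ 2)) * γ ^ 2 := by
          apply mul_le_mul_of_nonneg_right _ (sq_nonneg γ)
          apply one_div_le_one_div_of_le (by positivity)
          linarith
    _ = (γ ^ 2 / lam) / (2 * lam) := by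
          field_simp
          try exact Or.inl trivial
    _ ≤ N2 / (2 * lam) := by
          exact (div_le_div_iff_of_pos_right (by positivity)).mpr e1
    _ ≤ breg ψ x y := hbreg_lo
  · calc breg ψ x y ≤ lam * N2 / 2 := hbreg_hi
    _ ≤ lam * (lam * γ ^ 2) / 2 := by
        have h := mul_le_mul_of_nonneg_left hC hlam0.le
        linarith
    _ ≤ (lam ^ 4 / 2) * γ ^ 2 := by
        have hl2 : (1:ℝ) ≤ lam ^ 2 := by nlinarith
        have hl24 : lam ^ 2 ≤ lam ^ 4 := by nlinarith [sq_nonneg lam]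
        nlinarith [mul_le_mul_of_nonneg_right hl24 (sq_nonneg γ)]
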